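/- Let ℓ be a prime and K a discrete valuation field of characteristic zero and residue characteristic ℓ, with maximal ideal m of O_K and absolute ramification index e = v(ℓ). Let S be a free O_K-module of finite rank and A an O_K-linear automorphism of S of finite order. If 2e < ℓ − 1 and (A − 1)² ∈ m·End(S), then A = 1. -/

import Mathlib

open Finset in
private lemma binom_aux {R : Type} [Ring R] {p : ℕ} (hp : p.Prime) (N : R) :
    (1 + N) ^ p =
      1 + p • N + p • (N ^ 2 * ∑ k ∈ range (p - 2), (p.choose (k + 2) / p) • N ^ k) + N ^ p := by
  have h2 : 2 ≤ p := hp.two_le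
  have h := (Commute.one_right N).add_pow p
  have hterm : ∀ m ∈ range (p + 1),
      N ^ m * 1 ^ (p - m) * (p.choose m : R) = p.choose m • N ^ m := by
    intro m _
    rw [one_pow, mul_one, nsmul_eq_mul, (Nat.cast_commute (p.choose m) (N ^ m)).eq]
  rw [add_comm (1 : R) N, h, Finset.sum_congr rfl hterm, Finset.sum_range_succ,
    Nat.choose_self, Finset.range_eq_Ico,
    ← Finset.sum_Ico_consecutive _ (by omega : 0 ≤ 2) (by omega : 2 ≤ p),
    show Finset.Ico 0 2 = {0, 1} from rfl, Finset.sum_pair (by omega),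
    Finset.sum_Ico_eq_sum_range]
  have hmid : ∀ k ∈ range (p - 2),
      p.choose (2 + k) • N ^ (2 + k) = p • (N ^ 2 * ((p.choose (k + 2) / p) • N ^ k)) := by
    intro k hk
    have hk' : k < p - 2 := Finset.mem_range.mp hk
    have hdvd : p ∣ p.choose (k + 2) := hp.dvd_choose_self (by omega) (by omega)
    rw [show 2 + k = k + 2 from by omega, mul_smul_comm, smul_smul,
      Nat.mul_div_cancel' hdvd, ← pow_add, show k + 2 = 2 + k from by omega]
  rw [Finset.sum_congr rfl hmid, ← Finset.smul_sum, ← Finset.mul_sum]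
  simp only [Nat.choose_zero_right, Nat.choose_one_right, pow_zero, pow_one, one_smul,
    ← Finset.range_eq_Ico]

theorem stmt_10 (ℓ e : ℕ) (hℓ : ℓ.Prime)
    (O : Type) [CommRing O] [IsDomain O] [IsDiscreteValuationRing O] [CharZero O]
    (hres : (ℓ : O) ∈ IsLocalRing.maximalIdeal O)
    (he : (ℓ : O) ∈ (IsLocalRing.maximalIdeal O) ^ e ∧
          (ℓ : O) ∉ (IsLocalRing.maximalIdeal O) ^ (e + 1))
    (hbound : 2 * e < ℓ - 1)
    (S : Type) [AddCommGroup S] [Module O S] [Module.Free O S] [Module.Finite O S]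
    (A : S ≃ₗ[O] S) (hfin : IsOfFinOrder A)
    (hA : ((A : Module.End O S) - 1) ^ 2 ∈
        (IsLocalRing.maximalIdeal O) • (⊤ : Submodule O (Module.End O S))) :
    A = 1 := by
  classical
  obtain ⟨π, hπ⟩ := IsDiscreteValuationRing.exists_irreducible O
  have hπ0 : π ≠ 0 := hπ.ne_zero
  have hmax : IsLocalRing.maximalIdeal O = Ideal.span {π} :=
    (IsDiscreteValuationRing.irreducible_iff_uniformizer π).mp hπ
  -- `e ≥ 1`
  have he1 : 1 ≤ e := by
    rcases Nat.eq_zero_or_pos e with h0 | h; · exact absurd (by simpa [h0] using hres) (by simpa [h0] using he.2)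
    exact h
  have hℓ2 : ℓ ≠ 2 := by omega
  obtain ⟨m, hm⟩ : Odd ℓ := hℓ.odd_of_ne_two hℓ2
  have hem : e + 1 ≤ m := by omega
  -- `ℓ = π^e * c` with `c` a unit
  obtain ⟨c, hc⟩ : ∃ c, (ℓ : O) = π ^ e * c := by
    have h1 : (ℓ : O) ∈ Ideal.span {π ^ e} := by
      rw [← Ideal.span_singleton_pow, ← hmax]; exact he.1
    exact Ideal.mem_span_singleton'.mp h1 |>.imp fun c h => by rw [← h, mul_comm]
  have hcu : IsUnit c := by
    by_contra hcu
    apply he.2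
    have hcm : c ∈ Ideal.span {π} := by
      rw [← hmax]; exact hcu
    obtain ⟨d, hd⟩ := Ideal.mem_span_singleton.mp hcm
    rw [hmax, Ideal.span_singleton_pow, Ideal.mem_span_singleton]
    exact ⟨d, by rw [hc, hd]; ring⟩
  -- cancellation of nonzero scalars on endomorphisms
  have hcancel : ∀ (a : O), a ≠ 0 → ∀ f g : Module.End O S, a • f = a • g → f = g := by
    intro a ha f g h
    ext s
    have h1 : a • f s = a • g s := by
      have := LinearMap.congr_fun h s
      simpa using this
    exact smul_right_injective S ha h1
  -- Krull intersection
  have hkrull : ∀ f : Module.End O S, (∀ k : ℕ, ∃ g, f = π ^ k • g) → f = 0 := by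
    intro f hf
    by_contra hf0
    obtain ⟨s, hs⟩ : ∃ s, f s ≠ 0 := by
      by_contra hcon; push_neg at hcon; exact hf0 (LinearMap.ext hcon)
    set B := Module.Free.chooseBasis O S with hB
    obtain ⟨i, hi⟩ : ∃ i, B.repr (f s) i ≠ 0 := by
      by_contra hcon; push_neg at hcon
      have h0 : B.repr (f s) = 0 := by ext a; simpa using hcon a
      exact hs (by simpa using congrArg B.repr.symm h0)
    have hdvd : ∀ k : ℕ, π ^ k ∣ B.repr (f s) i := by
      intro k
      obtain ⟨g, hg⟩ := hf k
      refine ⟨B.repr (g s) i, ?_⟩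
      have h1 : f s = π ^ k • g s := by rw [hg]; rfl
      rw [h1, map_smul]; rfl
    obtain ⟨n, u, hu⟩ := IsDiscreteValuationRing.eq_unit_mul_pow_irreducible hi hπ
    obtain ⟨z, hz⟩ := hdvd (n + 1)
    rw [hu] at hz
    have hz' : (u : O) = π * z := by
      have : π ^ n * (u : O) = π ^ n * (π * z) := by
        rw [mul_comm (π ^ n) (u : O), hz]; ring
      exact mul_left_cancel₀ (pow_ne_zero n hπ0) this
    exact hπ.not_isUnit (isUnit_of_dvd_unit ⟨z, hz'⟩ u.isUnit)
  -- extract a `π`-divisibility witness from `hA`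
  obtain ⟨Y0, hY0⟩ : ∃ Y : Module.End O S, ((A : Module.End O S) - 1) ^ 2 = π • Y := by
    have h1 : (IsLocalRing.maximalIdeal O) • (⊤ : Submodule O (Module.End O S)) ≤
        LinearMap.range (LinearMap.lsmul O (Module.End O S) π) := by
      refine Submodule.smul_le.mpr ?_
      intro r hr n _
      rw [hmax, Ideal.mem_span_singleton] at hr
      obtain ⟨d, rfl⟩ := hr
      exact ⟨d • n, by simp [mul_smul, smul_comm d π n]⟩
    obtain ⟨Y, hY⟩ := h1 hA
    exact ⟨Y, by simpa using hY.symm⟩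
  -- core lemma: an endomorphism of prime order congruent to 1 (mod m, squared) is 1
  have core : ∀ p : ℕ, p.Prime → ∀ M : Module.End O S, M ^ p = 1 →
      (∃ Y, (M - 1) ^ 2 = π • Y) → M = 1 := by
    rintro p hp M hMp ⟨Z0, hZ0⟩
    have hp2 : 2 ≤ p := hp.two_le
    set N := M - 1 with hNdef
    have hMN : (1 : Module.End O S) + N = M := by rw [hNdef]; abel
    set v : Module.End O S := ∑ k ∈ Finset.range (p - 2), (p.choose (k + 2) / p) • N ^ k with hv
    have hM1 : M ^ p = 1 + p • N + p • (N ^ 2 * v) + N ^ p := by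
      rw [← hMN, hv]; exact binom_aux hp N
    have h1 : (1 : Module.End O S) + ((p : O) • N + ((p : O) • (N ^ 2 * v) + N ^ p))
        = M ^ p := by
      rw [hM1, Nat.cast_smul_eq_nsmul, Nat.cast_smul_eq_nsmul]; abel
    have hrel : (p : O) • N + ((p : O) • (N ^ 2 * v) + N ^ p) = 0 := by
      have h2 : (1 : Module.End O S) + ((p : O) • N + ((p : O) • (N ^ 2 * v) + N ^ p))
          = 1 + 0 := by rw [add_zero, h1, hMp]
      exact add_left_cancel h2
    have hrel' : (p : O) • N = -((p : O) • (N ^ 2 * v) + N ^ p) :=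
      eq_neg_of_add_eq_zero_left hrel
    have hstep : ∀ b : ℕ, (∃ y, N ^ 2 = π ^ (b + 1) • y) → ∃ y, N ^ 2 = π ^ (b + 2) • y := by
      by_cases hpl : p = ℓ
      · -- the wildly ramified prime
        rw [hpl] at hrel'
        rintro b ⟨y, hy⟩
        set β := b + 1 with hβdef
        have hβ1 : 1 ≤ β := by omega
        have hP2 : β * e + β ≤ β * m := by
          calc β * e + β = β * (e + 1) := by ring
          _ ≤ β * m := Nat.mul_le_mul_left β (by omega)
        have hP3 : e ≤ β * e := Nat.le_mul_of_pos_left e (by omega)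
        have hsh : ∀ E : ℕ, 2 * e + β + 1 ≤ E → ∀ z : Module.End O S,
            ∃ w, π ^ E • z = π ^ (2 * e + β) • (π • w) := by
          intro E hE z
          refine ⟨π ^ (E - (2 * e + β + 1)) • z, ?_⟩
          rw [smul_smul, smul_smul, ← pow_succ, ← pow_add, Nat.add_sub_cancel' hE]
        set z1 : Module.End O S := c • (y * v) with hz1
        set z2 : Module.End O S := y ^ m * N with hz2
        have h1' : (ℓ : O) • (N ^ 2 * v) = π ^ (e + β) • z1 := by
          rw [hz1]
          rw [hy, smul_mul_assoc, hc, smul_smul, smul_smul,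
            show π ^ e * c * π ^ β = π ^ (e + β) * c from by rw [pow_add]; ring, mul_smul]
        have h2' : N ^ ℓ = (N ^ 2) ^ m * N := by rw [← pow_mul, ← pow_succ, ← hm]
        have h2'' : N ^ ℓ = π ^ (β * m) • z2 := by
          rw [hz2, h2', hy, smul_pow, ← pow_mul, smul_mul_assoc]
        have hkey : ((ℓ : O) * (ℓ : O)) • N ^ 2
            = (π ^ (e + β) • z1 + π ^ (β * m) • z2)
              * (π ^ (e + β) • z1 + π ^ (β * m) • z2) := by
          rw [← h1', ← h2'', ← neg_mul_neg ((ℓ : O) • (N ^ 2 * v) + N ^ ℓ), ← hrel',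
            smul_mul_smul_comm, pow_two]
        obtain ⟨w1, hw1⟩ := hsh ((e + β) + (e + β)) (by omega) (z1 * z1)
        obtain ⟨w2, hw2⟩ := hsh ((e + β) + (β * m)) (by omega) (z1 * z2)
        obtain ⟨w3, hw3⟩ := hsh ((β * m) + (e + β)) (by omega) (z2 * z1)
        obtain ⟨w4, hw4⟩ := hsh ((β * m) + (β * m)) (by omega) (z2 * z2)
        have hexp : (π ^ (e + β) • z1 + π ^ (β * m) • z2)
              * (π ^ (e + β) • z1 + π ^ (β * m) • z2)
            = π ^ ((e + β) + (e + β)) • (z1 * z1)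
              + π ^ ((e + β) + (β * m)) • (z1 * z2)
              + (π ^ ((β * m) + (e + β)) • (z2 * z1)
              + π ^ ((β * m) + (β * m)) • (z2 * z2)) := by
          rw [add_mul, mul_add, mul_add,
            smul_mul_smul_comm (π ^ (e + β)) z1 (π ^ (e + β)) z1,
            smul_mul_smul_comm (π ^ (e + β)) z1 (π ^ (β * m)) z2,
            smul_mul_smul_comm (π ^ (β * m)) z2 (π ^ (e + β)) z1,
            smul_mul_smul_comm (π ^ (β * m)) z2 (π ^ (β * m)) z2,
            ← pow_add, ← pow_add, ← pow_add, ← pow_add]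
        have hLHS2 : ((ℓ : O) * (ℓ : O)) • N ^ 2 = π ^ (2 * e + β) • ((c * c) • y) := by
          rw [hy, hc, smul_smul,
            show π ^ e * c * (π ^ e * c) * π ^ β = π ^ (2 * e + β) * (c * c) from by
              rw [show 2 * e + β = e + e + β from by omega, pow_add, pow_add]; ring,
            mul_smul]
        have heq : π ^ (2 * e + β) • ((c * c) • y)
            = π ^ (2 * e + β) • (π • (w1 + w2 + (w3 + w4))) := by
          rw [← hLHS2, hkey, hexp, hw1, hw2, hw3, hw4]
          simp only [smul_add]
        have hcc : (c * c) • y = π • (w1 + w2 + (w3 + w4)) :=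
          hcancel _ (pow_ne_zero _ hπ0) _ _ heq
        obtain ⟨uc, huc⟩ := hcu
        refine ⟨((uc⁻¹ : Oˣ) : O) • (((uc⁻¹ : Oˣ) : O) • (w1 + w2 + (w3 + w4))), ?_⟩
        have hy2 : y = π • (((uc⁻¹ : Oˣ) : O) • (((uc⁻¹ : Oˣ) : O) • (w1 + w2 + (w3 + w4)))) := by
          have h3 := congrArg (fun z => ((uc⁻¹ : Oˣ) : O) • ((uc⁻¹ : Oˣ) : O) • z) hcc
          rw [smul_smul, smul_smul,
            show ((uc⁻¹ : Oˣ) : O) * ((uc⁻¹ : Oˣ) : O) * (c * c) = 1 from by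
              rw [← huc, mul_mul_mul_comm, Units.inv_mul, one_mul],
            one_smul] at h3
          rw [h3, smul_comm ((uc⁻¹ : Oˣ) : O) π, smul_comm ((uc⁻¹ : Oˣ) : O) π]
        rw [hy, hy2, smul_smul, ← pow_succ]
      · -- tame primes
        rintro b ⟨y, hy⟩
        have hpu : IsUnit (p : O) := by
          by_contra hpu
          have hpm : (p : O) ∈ IsLocalRing.maximalIdeal O := hpu
          have hco : IsCoprime (p : O) (ℓ : O) := by
            have hz : IsCoprime (p : ℤ) (ℓ : ℤ) := by
              rw [Int.isCoprime_iff_gcd_eq_one, Int.gcd_natCast_natCast]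
              exact (Nat.coprime_primes hp hℓ).mpr hpl
            have := hz.map (Int.castRingHom O)
            simpa using this
          obtain ⟨a', b', hab⟩ := hco
          have h1m : (1 : O) ∈ IsLocalRing.maximalIdeal O := by
            rw [← hab]
            exact Ideal.add_mem _ (Ideal.mul_mem_left _ _ hpm) (Ideal.mul_mem_left _ _ hres)
          exact (IsLocalRing.maximalIdeal.isMaximal O).ne_top
            (Ideal.eq_top_of_isUnit_mem _ h1m isUnit_one)
        obtain ⟨u, hu⟩ := hpu
        have hNp' : N ^ p = N ^ 2 * N ^ (p - 2) := by rw [← pow_add]; congr 1; omega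
        have hNT : ∃ T, N = N ^ 2 * T := by
          refine ⟨-v - ((u⁻¹ : Oˣ) : O) • N ^ (p - 2), ?_⟩
          have h3 : ((u⁻¹ : Oˣ) : O) • ((p : O) • N)
              = ((u⁻¹ : Oˣ) : O) • (-((p : O) • (N ^ 2 * v) + N ^ p)) := by rw [hrel']
          rw [← hu, smul_smul, Units.inv_mul, one_smul] at h3
          have h5 : ((u⁻¹ : Oˣ) : O) • (-(((u : Oˣ) : O) • (N ^ 2 * v) + N ^ p))
              = N ^ 2 * (-v - ((u⁻¹ : Oˣ) : O) • N ^ (p - 2)) := by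
            rw [smul_neg, smul_add, smul_smul, Units.inv_mul, one_smul, hNp', mul_sub,
              mul_neg, mul_smul_comm, ← hNp']
            abel
          exact h3.trans h5
        obtain ⟨T, hT⟩ := hNT
        have hN1 : N = π ^ (b + 1) • (y * T) := by
          calc N = N ^ 2 * T := hT
          _ = π ^ (b + 1) • (y * T) := by rw [hy, smul_mul_assoc]
        refine ⟨π ^ b • ((y * T) * (y * T)), ?_⟩
        calc N ^ 2 = N * N := pow_two N
        _ = (π ^ (b + 1) • (y * T)) * (π ^ (b + 1) • (y * T)) := by rw [← hN1]
        _ = π ^ (b + 2) • (π ^ b • ((y * T) * (y * T))) := by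
          rw [smul_mul_smul_comm, ← pow_add, smul_smul, ← pow_add,
            show (b + 2) + b = (b + 1) + (b + 1) from by omega]
    have hall : ∀ b : ℕ, ∃ y, N ^ 2 = π ^ (b + 1) • y := by
      intro b
      induction b with
      | zero => exact ⟨Z0, by simpa using hZ0⟩
      | succ n ih => exact hstep n ih
    have hN2 : N ^ 2 = 0 := by
      apply hkrull
      intro k
      cases k with
      | zero => exact ⟨N ^ 2, by simp⟩
      | succ n => exact hall n
    have hNp : N ^ p = 0 := by
      have h4 : N ^ p = N ^ 2 * N ^ (p - 2) := by rw [← pow_add]; congr 1; omega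
      rw [h4, hN2, zero_mul]
    have hpN : (p : O) • N = 0 := by
      have h5 := hrel
      rw [hN2, zero_mul, smul_zero, hNp, add_zero, add_zero] at h5
      exact h5
    have hN0 : N = 0 :=
      hcancel (p : O) (Nat.cast_ne_zero.mpr hp.ne_zero) N 0 (by rw [hpN, smul_zero])
    rw [hNdef, sub_eq_zero] at hN0
    exact hN0
  -- conclude by descending the order of A
  by_contra hA1
  have hn1 : orderOf A ≠ 1 := fun h => hA1 (orderOf_eq_one_iff.mp h)
  have hn0 : 0 < orderOf A := hfin.orderOf_pos
  set n := orderOf A with hn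
  set p := n.minFac with hpdef
  have hp : p.Prime := Nat.minFac_prime hn1
  have hpn : p ∣ n := Nat.minFac_dvd n
  set t := n / p with htdef
  have ht0 : 0 < t := Nat.div_pos (Nat.le_of_dvd hn0 hpn) hp.pos
  have htn : t < n := Nat.div_lt_self hn0 hp.one_lt
  have hcoe : ∀ k : ℕ, ((A ^ k : S ≃ₗ[O] S) : Module.End O S) = (A : Module.End O S) ^ k :=
    fun k => map_pow LinearEquiv.automorphismGroup.toLinearMapMonoidHom A k
  set x := (A : Module.End O S) with hx
  have hMp : (x ^ t) ^ p = 1 := by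
    rw [← pow_mul, hx, ← hcoe, Nat.div_mul_cancel hpn, pow_orderOf_eq_one]
    rfl
  have hGe : ∃ Y, (x ^ t - 1) ^ 2 = π • Y := by
    set G : Module.End O S := ∑ i ∈ Finset.range t, x ^ i with hG
    refine ⟨G * (Y0 * G), ?_⟩
    have hg1 : x ^ t - 1 = G * (x - 1) := (geom_sum_mul x t).symm
    have hg2 : x ^ t - 1 = (x - 1) * G := (mul_geom_sum x t).symm
    calc (x ^ t - 1) ^ 2 = (x ^ t - 1) * (x ^ t - 1) := pow_two _
    _ = (G * (x - 1)) * ((x - 1) * G) := by nth_rewrite 1 [hg1]; rw [hg2]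
    _ = G * (((x - 1) * (x - 1)) * G) := by rw [mul_assoc, ← mul_assoc (x - 1)]
    _ = G * ((π • Y0) * G) := by rw [← pow_two, hY0]
    _ = π • (G * (Y0 * G)) := by rw [smul_mul_assoc, mul_smul_comm]
  have hM1 : x ^ t = 1 := core p hp (x ^ t) hMp hGe
  have hAt : A ^ t = 1 := by
    apply LinearEquiv.toLinearMap_injective
    have h6 := hcoe t
    rw [hx] at h6
    rw [h6, hM1]
    rfl
  have h7 := orderOf_dvd_of_pow_eq_one hAt
  have h8 := Nat.le_of_dvd ht0 h7
  omega
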